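/- Let N ≥ 2, α > -1, n ∈ (ℕ_{≥1})^N with n_i ≥ 2 for at least one i, and j a multi-index with 0 ≤ j_i ≤ n_i - 1. Define c_{kj} = sqrt( (nk+j)! Γ(N+|k|+α+1) Γ(N+|j|+α+1) / (k! j! Γ(N+|nk+j|+α+1) Γ(N+α+1)) ) for k ∈ ℕ^N. Then liminf_{|k|→∞} c_{kj} = 0. -/

import Mathlib

open Filter

/-- The filter on multi-indices `k ∈ ℕ^N` corresponding to `|k| → ∞`. -/
def multiAtTop (N : ℕ) : Filter (Fin N → ℕ) :=
  Filter.comap (fun k : Fin N → ℕ => ∑ i, k i) Filter.atTop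

/-- `c_{kj} = sqrt((nk+j)! Γ(N+|k|+α+1) Γ(N+|j|+α+1) /
(k! j! Γ(N+|nk+j|+α+1) Γ(N+α+1)))`. -/
noncomputable def cCoef (N : ℕ) (α : ℝ) (n j k : Fin N → ℕ) : ℝ :=
  Real.sqrt ((∏ i, ((n i * k i + j i).factorial : ℝ)) *
      Real.Gamma (N + (∑ i, k i) + α + 1) * Real.Gamma (N + (∑ i, j i) + α + 1) /
    ((∏ i, ((k i).factorial : ℝ)) * (∏ i, ((j i).factorial : ℝ)) *
      Real.Gamma (N + (∑ i, (n i * k i + j i)) + α + 1) * Real.Gamma (N + α + 1)))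

/-- Gamma of `x` plus a natural number, as a product. -/
lemma my_gamma_add_nat (x : ℝ) (hx : 0 < x) (m : ℕ) :
    Real.Gamma (x + m) = Real.Gamma x * ∏ l ∈ Finset.range m, (x + l) := by
  induction m with
  | zero => simp
  | succ m ih =>
    have h1 : (x + (m + 1 : ℕ) : ℝ) = (x + m) + 1 := by push_cast; ring
    have h2 : (0 : ℝ) < x + m := by positivity
    rw [h1, Real.Gamma_add_one (ne_of_gt h2), ih, Finset.prod_range_succ]
    ring

/-- Factorial of a sum, as a product, in `ℝ`. -/
lemma my_fact_add (M D : ℕ) :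
    (((M + D).factorial : ℕ) : ℝ) =
      (M.factorial : ℝ) * ∏ l ∈ Finset.range D, ((M : ℝ) + 1 + l) := by
  induction D with
  | zero => simp
  | succ D ih =>
    have : M + (D + 1) = (M + D) + 1 := by ring
    rw [this, Nat.factorial_succ, Finset.prod_range_succ]
    push_cast [ih]
    ring

set_option maxHeartbeats 2000000 in
theorem cCoef_liminf_zero (N : ℕ) (hN : 2 ≤ N) (α : ℝ) (hα : -1 < α)
    (n : Fin N → ℕ) (hn : ∀ i, 1 ≤ n i) (hn2 : ∃ i, 2 ≤ n i)
    (j : Fin N → ℕ) (hj : ∀ i, j i < n i) :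
    liminf (cCoef N α n j) (multiAtTop N) = 0 := by
  classical
  obtain ⟨a, ha⟩ := hn2
  obtain ⟨b, hba⟩ : ∃ b : Fin N, b ≠ a :=
    Fintype.exists_ne_of_one_lt_card (by simpa using (by omega : 1 < N)) a
  set T : ℝ := (N : ℝ) + α + 1 with hTdef
  have hNR : (2 : ℝ) ≤ (N : ℝ) := by exact_mod_cast hN
  have hT : 0 < T := by rw [hTdef]; linarith
  obtain ⟨na, hna⟩ : ∃ na, n a = na + 2 := ⟨n a - 2, by omega⟩
  obtain ⟨nb, hnb⟩ : ∃ nb, n b = nb + 1 := ⟨n b - 1, by have := hn b; omega⟩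
  set J : ℕ := ∑ i, j i with hJdef
  have hjbJ : j b ≤ J := Finset.single_le_sum (fun i _ => Nat.zero_le _) (Finset.mem_univ b)
  obtain ⟨J', hJ'⟩ : ∃ J', J = j b + J' := ⟨J - j b, by omega⟩
  -- the test sequence
  set kseq : ℕ → Fin N → ℕ := fun M i => if i = a then 1 else if i = b then M else 0 with hkseq
  have hbmem : b ∈ Finset.univ.erase a := Finset.mem_erase.mpr ⟨hba, Finset.mem_univ b⟩
  set s2 : Finset (Fin N) := (Finset.univ.erase a).erase b with hs2
  have hsum : ∀ f : Fin N → ℕ, ∑ i, f i = f a + (f b + ∑ i ∈ s2, f i) := by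
    intro f
    rw [← Finset.add_sum_erase _ f (Finset.mem_univ a), ← Finset.add_sum_erase _ f hbmem]
  have hprod : ∀ f : Fin N → ℝ, ∏ i, f i = f a * (f b * ∏ i ∈ s2, f i) := by
    intro f
    rw [← Finset.mul_prod_erase _ f (Finset.mem_univ a), ← Finset.mul_prod_erase _ f hbmem]
  have hmem2 : ∀ i ∈ s2, i ≠ a ∧ i ≠ b := by
    intro i hi
    rw [hs2] at hi
    exact ⟨(Finset.mem_erase.mp (Finset.mem_of_mem_erase hi)).1, (Finset.mem_erase.mp hi).1⟩
  -- constants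
  set R : ℝ := ∏ i ∈ s2, ((j i).factorial : ℝ) with hR
  set Pj : ℝ := ∏ i, ((j i).factorial : ℝ) with hPj
  set GJ : ℝ := ∏ l ∈ Finset.range J, (T + l) with hGJ
  have hGJpos : 0 < GJ := Finset.prod_pos (fun l _ => by positivity)
  have hRpos : 0 < R := Finset.prod_pos (fun i _ => by positivity)
  have hPjR : Pj = ((j a).factorial : ℝ) * (((j b).factorial : ℝ) * R) := hprod _
  have hRPj : R ≤ Pj := by
    rw [hPjR]
    have h1 : (1 : ℝ) ≤ ((j a).factorial : ℝ) := by exact_mod_cast (j a).factorial_pos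
    have h2 : (1 : ℝ) ≤ ((j b).factorial : ℝ) := by exact_mod_cast (j b).factorial_pos
    have step1 : R ≤ ((j b).factorial : ℝ) * R := le_mul_of_one_le_left hRpos.le h2
    have step2 : ((j b).factorial : ℝ) * R ≤ ((j a).factorial : ℝ) * (((j b).factorial : ℝ) * R) :=
      le_mul_of_one_le_left (by positivity) h1
    exact step1.trans step2
  set C : ℝ := (((n a + j a).factorial : ℝ)) * GJ with hC
  -- pointwise computations
  have hk_a : ∀ M, kseq M a = 1 := fun M => by simp [hkseq]
  have hk_b : ∀ M, kseq M b = M := fun M => by simp [hkseq, hba]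
  have key1 : ∀ M, ∑ i, kseq M i = 1 + M := by
    intro M
    rw [hsum, hk_a, hk_b]
    have : ∑ i ∈ s2, kseq M i = 0 := Finset.sum_eq_zero (fun i hi => by
      obtain ⟨h1, h2⟩ := hmem2 i hi; simp [hkseq, h1, h2])
    omega
  have key2 : ∀ M, ∏ i, ((kseq M i).factorial : ℝ) = (M.factorial : ℝ) := by
    intro M
    rw [hprod, hk_a, hk_b]
    have : ∏ i ∈ s2, (((kseq M i).factorial : ℕ) : ℝ) = 1 := Finset.prod_eq_one (fun i hi => by
      obtain ⟨h1, h2⟩ := hmem2 i hi; simp [hkseq, h1, h2])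
    rw [this]; simp
  have key3 : ∀ M, ∑ i, (n i * kseq M i + j i) = (1 + M) + ((na + 1 + nb * M) + J) := by
    intro M
    rw [hsum]
    have hs2' : ∑ i ∈ s2, (n i * kseq M i + j i) = ∑ i ∈ s2, j i := Finset.sum_congr rfl
      (fun i hi => by obtain ⟨h1, h2⟩ := hmem2 i hi; simp [hkseq, h1, h2])
    have hJsplit : J = j a + (j b + ∑ i ∈ s2, j i) := hsum j
    have hmul : (nb + 1) * M = nb * M + M := by ring
    rw [hs2', hk_a, hk_b, hna, hnb, hmul]
    omega
  have key4 : ∀ M, ∏ i, (((n i * kseq M i + j i).factorial : ℕ) : ℝ) =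
      ((n a + j a).factorial : ℝ) * (((n b * M + j b).factorial : ℝ) * R) := by
    intro M
    rw [hprod, hk_a, hk_b, hR]
    have : ∏ i ∈ s2, (((n i * kseq M i + j i).factorial : ℕ) : ℝ)
        = ∏ i ∈ s2, (((j i).factorial : ℕ) : ℝ) := Finset.prod_congr rfl
      (fun i hi => by obtain ⟨h1, h2⟩ := hmem2 i hi; simp [hkseq, h1, h2])
    rw [this, mul_one (n a)]
  -- core bound: cCoef at kseq M is ≤ sqrt (C / (M+1))
  have hcore : ∀ M : ℕ, cCoef N α n j (kseq M) ≤ Real.sqrt (C / (M + 1)) := by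
    intro M
    apply Real.sqrt_le_sqrt
    rw [key1, key2, key3, key4]
    set D : ℕ := nb * M + j b with hD
    set d : ℕ := na + 1 + J' with hd
    have hMD : n b * M + j b = M + D := by rw [hnb, hD]; ring
    have hDd : na + 1 + nb * M + J = D + d := by omega
    -- rewrite the Gammas
    have hx1 : (0 : ℝ) < T + ((1 + M : ℕ) : ℝ) := by positivity
    have hG2 : Real.Gamma ((N : ℝ) + (((1 + M) + ((na + 1 + nb * M) + J) : ℕ) : ℝ) + α + 1) =
        Real.Gamma (T + ((1 + M : ℕ) : ℝ)) *
          ∏ l ∈ Finset.range (D + d), (T + ((1 + M : ℕ) : ℝ) + l) := by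
      rw [show ((N : ℝ) + (((1 + M) + ((na + 1 + nb * M) + J) : ℕ) : ℝ) + α + 1)
          = (T + ((1 + M : ℕ) : ℝ)) + ((D + d : ℕ) : ℝ) by
        rw [hTdef]; push_cast [hDd]; ring]
      exact my_gamma_add_nat _ hx1 _
    have hG1 : Real.Gamma ((N : ℝ) + ((1 + M : ℕ) : ℝ) + α + 1) =
        Real.Gamma (T + ((1 + M : ℕ) : ℝ)) := by
      rw [hTdef]; ring_nf
    have hG3 : Real.Gamma ((N : ℝ) + (J : ℝ) + α + 1) = Real.Gamma T * GJ := by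
      rw [show ((N : ℝ) + (J : ℝ) + α + 1) = T + (J : ℕ) by rw [hTdef]; push_cast; ring]
      exact my_gamma_add_nat _ hT _
    have hG0 : Real.Gamma ((N : ℝ) + α + 1) = Real.Gamma T := by rw [hTdef]
    rw [hG1, hG2, hG3, hG0]
    -- factorial rewrite
    have hF : ((n b * M + j b).factorial : ℝ) =
        (M.factorial : ℝ) * ∏ l ∈ Finset.range D, ((M : ℝ) + 1 + l) := by
      rw [hMD]; exact my_fact_add M D
    rw [hF]
    set Γ1 : ℝ := Real.Gamma (T + ((1 + M : ℕ) : ℝ)) with hΓ1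
    set ΓT : ℝ := Real.Gamma T with hΓT
    have hΓ1pos : 0 < Γ1 := Real.Gamma_pos_of_pos hx1
    have hΓTpos : 0 < ΓT := Real.Gamma_pos_of_pos hT
    set PD : ℝ := ∏ l ∈ Finset.range D, ((M : ℝ) + 1 + l) with hPD
    set PH : ℝ := ∏ l ∈ Finset.range (D + d), (T + ((1 + M : ℕ) : ℝ) + l) with hPH
    have hPDpos : 0 < PD := Finset.prod_pos (fun l _ => by positivity)
    have hPHpos : 0 < PH := Finset.prod_pos (fun l _ => by positivity)
    have hMfpos : (0 : ℝ) < (M.factorial : ℝ) := by exact_mod_cast M.factorial_pos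
    have hPjpos : 0 < Pj := Finset.prod_pos (fun i _ => by positivity)
    have hM1 : (0 : ℝ) < (M : ℝ) + 1 := by positivity
    have hnafpos : (0 : ℝ) < ((n a + j a).factorial : ℝ) := by
      exact_mod_cast (n a + j a).factorial_pos
    rw [div_le_div_iff₀ (by positivity) hM1]
    -- reduce to: PD * R * (M+1) ≤ Pj * PH
    have hred : PD * R * ((M : ℝ) + 1) ≤ Pj * PH := by
      have hsplit : PH = (∏ l ∈ Finset.range D, (T + ((1 + M : ℕ) : ℝ) + l)) *
          ∏ l ∈ Finset.range d, (T + ((1 + M : ℕ) : ℝ) + ((D + l : ℕ) : ℝ)) := by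
        rw [hPH, Finset.prod_range_add]
      have h1 : PD ≤ ∏ l ∈ Finset.range D, (T + ((1 + M : ℕ) : ℝ) + l) := by
        apply Finset.prod_le_prod
        · intro l _; positivity
        · intro l _; push_cast; linarith [hT]
      have h2 : (M : ℝ) + 1 ≤ ∏ l ∈ Finset.range d, (T + ((1 + M : ℕ) : ℝ) + ((D + l : ℕ) : ℝ)) := by
        have hd1 : 1 ≤ d := by omega
        calc (M : ℝ) + 1 ≤ ((M : ℝ) + 1) ^ d := le_self_pow₀ (by linarith) (by omega)
          _ = ∏ l ∈ Finset.range d, ((M : ℝ) + 1) := by rw [Finset.prod_const, Finset.card_range]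
          _ ≤ _ := by
              apply Finset.prod_le_prod
              · intro l _; positivity
              · intro l _; push_cast; linarith [hT]
      have hP1pos : (0 : ℝ) < ∏ l ∈ Finset.range D, (T + ((1 + M : ℕ) : ℝ) + l) :=
        Finset.prod_pos (fun l _ => by positivity)
      calc PD * R * ((M : ℝ) + 1) ≤
          (∏ l ∈ Finset.range D, (T + ((1 + M : ℕ) : ℝ) + l)) * Pj *
            (∏ l ∈ Finset.range d, (T + ((1 + M : ℕ) : ℝ) + ((D + l : ℕ) : ℝ))) := by
            apply mul_le_mul
            · exact mul_le_mul h1 hRPj (le_of_lt hRpos) (le_of_lt hP1pos)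
            · exact h2
            · positivity
            · positivity
        _ = Pj * PH := by rw [hsplit]; ring
    calc ((n a + j a).factorial : ℝ) * ((M.factorial : ℝ) * PD * R) * Γ1 * (ΓT * GJ) * ((M : ℝ) + 1)
          = (((n a + j a).factorial : ℝ) * GJ * ((M.factorial : ℝ) * Γ1 * ΓT)) *
            (PD * R * ((M : ℝ) + 1)) := by ring
      _ ≤ (((n a + j a).factorial : ℝ) * GJ * ((M.factorial : ℝ) * Γ1 * ΓT)) * (Pj * PH) := by
            apply mul_le_mul_of_nonneg_left hred
            positivity
      _ = C * ((M.factorial : ℝ) * Pj * (Γ1 * PH) * ΓT) := by rw [hC]; ring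
  -- tendsto of cCoef along kseq
  have htend : Tendsto (fun M => cCoef N α n j (kseq M)) atTop (nhds 0) := by
    have hub : Tendsto (fun M : ℕ => Real.sqrt (C / (M + 1))) atTop (nhds 0) := by
      have : Tendsto (fun M : ℕ => C / (M + 1)) atTop (nhds 0) := by
        apply Tendsto.div_atTop (tendsto_const_nhds)
        exact tendsto_atTop_add_const_right _ 1 tendsto_natCast_atTop_atTop
      simpa [Function.comp_def] using (Real.continuous_sqrt.continuousAt.tendsto.comp this)
    exact tendsto_of_tendsto_of_tendsto_of_le_of_le tendsto_const_nhds hub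
      (fun M => Real.sqrt_nonneg _) hcore
  -- the sequence tends to multiAtTop
  have hseq : Tendsto kseq atTop (multiAtTop N) := by
    rw [multiAtTop, tendsto_comap_iff]
    have : (fun M => ∑ i, kseq M i) = fun M => 1 + M := funext key1
    show Tendsto (fun M => ∑ i, kseq M i) atTop atTop
    rw [this]
    exact tendsto_atTop_mono (fun M => Nat.le_add_left M 1) tendsto_id
  have hNeBot : (multiAtTop N).NeBot := Filter.neBot_of_le (f := Filter.map kseq atTop) hseq
  -- frequently small
  have hfreq : ∀ ε : ℝ, 0 < ε → ∃ᶠ k in multiAtTop N, cCoef N α n j k ≤ ε := by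
    intro ε hε
    have hev : ∀ᶠ M in atTop, cCoef N α n j (kseq M) ≤ ε := by
      filter_upwards [htend.eventually (eventually_lt_nhds hε)] with M hM
      exact le_of_lt hM
    have : ∃ᶠ M in atTop, cCoef N α n j (kseq M) ≤ ε := hev.frequently
    rw [← Filter.frequently_map (f := atTop) (m := kseq)
      (P := fun k => cCoef N α n j k ≤ ε)] at this
    exact this.filter_mono hseq
  -- conclude
  have hbdd : IsBoundedUnder (· ≥ ·) (multiAtTop N) (cCoef N α n j) :=
    Filter.isBoundedUnder_of ⟨0, fun k => Real.sqrt_nonneg _⟩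
  have hcob : IsCoboundedUnder (· ≥ ·) (multiAtTop N) (cCoef N α n j) :=
    Filter.IsCoboundedUnder.of_frequently_le (hfreq 1 one_pos)
  apply le_antisymm
  · have h : ∀ ε : ℝ, 0 < ε → liminf (cCoef N α n j) (multiAtTop N) ≤ ε := fun ε hε =>
      Filter.liminf_le_of_frequently_le (hfreq ε hε) hbdd
    by_contra hcon
    push_neg at hcon
    have := h (liminf (cCoef N α n j) (multiAtTop N) / 2) (by linarith)
    linarith
  · exact Filter.le_liminf_of_le hcob
      (Filter.Eventually.of_forall (fun k => Real.sqrt_nonneg _))
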